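/- For any canonical pair (φᵢ, ψᵢ) with canonical correlation λᵢ > 0, the quadruple (φᵢ, ψᵢ, λᵢφᵢ, λᵢψᵢ) is a fixed point of the AppGrad iteration: that is, if φ̃ = λᵢφᵢ and ψ = ψᵢ, then φ̃ − η₁ Sₓ(φ̃) + η₁ S_{xy} ψ = φ̃ for any step size η₁ > 0, and the normalization φ̃ / ‖φ̃‖_x = φᵢ, and symmetrically for the y-side. -/

import Mathlib

open Matrix

/-- each canonical quadruple `(φᵢ, ψᵢ, λᵢφᵢ, λᵢψᵢ)` is a fixed
point of the AppGrad iteration (gradient step and normalization step on both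
the x- and y-sides). -/
theorem stmt3 {p1 p2 p : ℕ}
    (Sx : Matrix (Fin p1) (Fin p1) ℝ) (Sy : Matrix (Fin p2) (Fin p2) ℝ)
    (Sxy : Matrix (Fin p1) (Fin p2) ℝ)
    (hSxpd : Sx.PosDef) (hSypd : Sy.PosDef)
    (Φ : Matrix (Fin p1) (Fin p) ℝ) (Ψ : Matrix (Fin p2) (Fin p) ℝ)
    (l : Fin p → ℝ)
    (hΦ : Φᵀ * Sx * Φ = 1) (hΨ : Ψᵀ * Sy * Ψ = 1)
    (hdecomp : Sxy = Sx * Φ * Matrix.diagonal l * Ψᵀ * Sy)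
    (i : Fin p) (hli : 0 < l i)
    (φi : Fin p1 → ℝ) (ψi : Fin p2 → ℝ)
    (hφi : φi = fun j => Φ j i) (hψi : ψi = fun j => Ψ j i)
    (η1 η2 : ℝ) (hη1 : 0 < η1) (hη2 : 0 < η2) :
    -- x-side gradient step is a fixed point
    (l i • φi) - η1 • (Sx *ᵥ (l i • φi)) + η1 • (Sxy *ᵥ ψi) = l i • φi ∧
    -- x-side normalization recovers `φᵢ`
    (Real.sqrt ((l i • φi) ⬝ᵥ (Sx *ᵥ (l i • φi))))⁻¹ • (l i • φi) = φi ∧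
    -- y-side gradient step is a fixed point
    (l i • ψi) - η2 • (Sy *ᵥ (l i • ψi)) + η2 • (Sxyᵀ *ᵥ φi) = l i • ψi ∧
    -- y-side normalization recovers `ψᵢ`
    (Real.sqrt ((l i • ψi) ⬝ᵥ (Sy *ᵥ (l i • ψi))))⁻¹ • (l i • ψi) = ψi := by
  have hSx : Sxᵀ = Sx := by exact (by simpa using hSxpd.isHermitian : Sx.IsSymm)
  have hSy : Syᵀ = Sy := by exact (by simpa using hSypd.isHermitian : Sy.IsSymm)
  set e : Fin p → ℝ := Pi.single i 1 with he
  have hφe : φi = Φ *ᵥ e := by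
    funext j; simp [hφi, he, mulVec, dotProduct, Pi.single_apply]
  have hψe : ψi = Ψ *ᵥ e := by
    funext j; simp [hψi, he, mulVec, dotProduct, Pi.single_apply]
  have hdiag : Matrix.diagonal l *ᵥ e = l i • e := by
    funext j
    by_cases h : j = i <;> simp [he, mulVec_diagonal, Pi.single_apply, h]
  have hee : e ⬝ᵥ e = 1 := by simp [he, dotProduct, Pi.single_apply]
  have hΨ' : Ψᵀ * (Sy * Ψ) = 1 := by rw [← Matrix.mul_assoc]; exact hΨ
  have hΦ' : Φᵀ * (Sx * Φ) = 1 := by rw [← Matrix.mul_assoc]; exact hΦ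
  -- x-side key identity
  have hx : Sxy *ᵥ ψi = l i • (Sx *ᵥ φi) := by
    rw [hψe, mulVec_mulVec, hdecomp]
    have hA : Sx * Φ * Matrix.diagonal l * Ψᵀ * Sy * Ψ = Sx * Φ * Matrix.diagonal l := by
      simp only [Matrix.mul_assoc, hΨ', Matrix.mul_one]
    rw [hA, ← mulVec_mulVec, hdiag, hφe, mulVec_mulVec, mulVec_smul]
  -- y-side key identity
  have hT : Sxyᵀ = Sy * Ψ * Matrix.diagonal l * Φᵀ * Sx := by
    rw [hdecomp]
    simp only [Matrix.transpose_mul, Matrix.transpose_transpose,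
      Matrix.diagonal_transpose, hSx, hSy, Matrix.mul_assoc]
  have hy : Sxyᵀ *ᵥ φi = l i • (Sy *ᵥ ψi) := by
    rw [hφe, mulVec_mulVec, hT]
    have hA : Sy * Ψ * Matrix.diagonal l * Φᵀ * Sx * Φ = Sy * Ψ * Matrix.diagonal l := by
      simp only [Matrix.mul_assoc, hΦ', Matrix.mul_one]
    rw [hA, ← mulVec_mulVec, hdiag, hψe, mulVec_mulVec, mulVec_smul]
  -- quadratic forms
  have hqx : φi ⬝ᵥ (Sx *ᵥ φi) = 1 := by
    rw [hφe, mulVec_mulVec, ← Matrix.vecMul_transpose, Matrix.dotProduct_mulVec,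
      Matrix.vecMul_vecMul, hΦ', Matrix.vecMul_one, hee]
  have hqy : ψi ⬝ᵥ (Sy *ᵥ ψi) = 1 := by
    rw [hψe, mulVec_mulVec, ← Matrix.vecMul_transpose, Matrix.dotProduct_mulVec,
      Matrix.vecMul_vecMul, hΨ', Matrix.vecMul_one, hee]
  have hnx : (l i • φi) ⬝ᵥ (Sx *ᵥ (l i • φi)) = l i * l i := by
    rw [mulVec_smul, smul_dotProduct, dotProduct_smul, hqx]
    simp [smul_eq_mul]
  have hny : (l i • ψi) ⬝ᵥ (Sy *ᵥ (l i • ψi)) = l i * l i := by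
    rw [mulVec_smul, smul_dotProduct, dotProduct_smul, hqy]
    simp [smul_eq_mul]
  refine ⟨?_, ?_, ?_, ?_⟩
  · rw [hx, mulVec_smul]; abel
  · rw [hnx, Real.sqrt_mul_self hli.le, smul_smul, inv_mul_cancel₀ hli.ne', one_smul]
  · rw [hy, mulVec_smul]; abel
  · rw [hny, Real.sqrt_mul_self hli.le, smul_smul, inv_mul_cancel₀ hli.ne', one_smul]
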